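/- Let A be the adjacency matrix of a connected undirected graph on n ≥ 1 vertices and let β, δ ∈ (0,1). Then the largest eigenvalue of the symmetric matrix (1−δ)I_n + βA is greater than 1 if and only if there exists a vector v ∈ ℝ^n with every entry strictly positive such that every entry of (βA − δI_n)v is strictly positive. -/

import Mathlib

open Matrix Finset

/-- The largest eigenvalue of a (symmetric) real matrix, as the supremum of its real spectrum. -/
noncomputable def lamMax {n : ℕ} (M : Matrix (Fin n) (Fin n) ℝ) : ℝ :=
  sSup (spectrum ℝ M)

/-- Any point of the real spectrum of a real matrix admits an eigenvector. -/
lemma exists_eigenvector_of_mem_spectrum {n : ℕ} {M : Matrix (Fin n) (Fin n) ℝ} {μ : ℝ}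
    (h : μ ∈ spectrum ℝ M) : ∃ u : Fin n → ℝ, u ≠ 0 ∧ M *ᵥ u = μ • u := by
  rw [← Matrix.spectrum_toEuclideanLin (A := M)] at h
  have he : Module.End.HasEigenvalue (toEuclideanLin M) μ :=
    Module.End.HasEigenvalue.of_mem_spectrum h
  obtain ⟨v, hv⟩ := he.exists_hasEigenvector
  refine ⟨(WithLp.equiv 2 (Fin n → ℝ)) v, ?_, ?_⟩
  · simpa using hv.right
  · have := hv.apply_eq_smul
    have h2 := congrArg (WithLp.equiv 2 (Fin n → ℝ)) this
    simpa using h2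

/-- The quadratic form of a hermitian real matrix in eigencoordinates. -/
lemma exists_qform_repr {n : ℕ} {M : Matrix (Fin n) (Fin n) ℝ} (hM : M.IsHermitian)
    (x : Fin n → ℝ) :
    ∃ w : Fin n → ℝ, x ⬝ᵥ (M *ᵥ x) = ∑ i, hM.eigenvalues i * (w i)^2 ∧
      x ⬝ᵥ x = ∑ i, (w i)^2 := by
  set U : Matrix (Fin n) (Fin n) ℝ := ↑hM.eigenvectorUnitary
  have hU1 : U * star U = 1 := (Matrix.mem_unitaryGroup_iff).mp hM.eigenvectorUnitary.2
  set w : Fin n → ℝ := star U *ᵥ x with hw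
  refine ⟨w, ?_, ?_⟩
  · conv_lhs => rw [hM.spectral_theorem]
    have : (U * diagonal (RCLike.ofReal ∘ hM.eigenvalues) * star U) *ᵥ x
        = U *ᵥ (diagonal (RCLike.ofReal ∘ hM.eigenvalues) *ᵥ w) := by
      rw [hw, ← mulVec_mulVec, ← mulVec_mulVec]
    rw [Unitary.conjStarAlgAut_apply, this]
    rw [dotProduct_mulVec x U _]
    have hxU : x ᵥ* U = w := by
      rw [hw]
      ext i
      simp [vecMul, mulVec, dotProduct, star_apply, conjTranspose_apply, mul_comm]
    rw [hxU]
    simp [dotProduct, mulVec_diagonal, Function.comp]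
    congr 1; ext i; ring
  · have : w ⬝ᵥ w = x ⬝ᵥ ((U * star U) *ᵥ x) := by
      rw [hw, ← mulVec_mulVec, dotProduct_mulVec x U _]
      congr 1
      ext i
      simp [vecMul, mulVec, dotProduct, star_apply, conjTranspose_apply, mul_comm]
    rw [hU1, one_mulVec] at this
    rw [← this]
    simp [dotProduct]
    congr 1; ext i; ring

/-- For `n ≥ 1` and hermitian `M`, `lamMax M` is in the spectrum and dominates the
Rayleigh quotient. -/
lemma lamMax_spec {n : ℕ} (hn : 1 ≤ n) {M : Matrix (Fin n) (Fin n) ℝ} (hM : M.IsHermitian) :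
    lamMax M ∈ spectrum ℝ M ∧
      ∀ x : Fin n → ℝ, x ⬝ᵥ (M *ᵥ x) ≤ lamMax M * (x ⬝ᵥ x) := by
  have hne : Nonempty (Fin n) := ⟨⟨0, hn⟩⟩
  obtain ⟨i₀, hi₀⟩ := Finite.exists_max hM.eigenvalues
  set L := hM.eigenvalues i₀ with hL
  -- Rayleigh bound with L
  have hq : ∀ x : Fin n → ℝ, x ⬝ᵥ (M *ᵥ x) ≤ L * (x ⬝ᵥ x) := by
    intro x
    obtain ⟨w, h1, h2⟩ := exists_qform_repr hM x
    rw [h1, h2, Finset.mul_sum]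
    refine Finset.sum_le_sum fun i _ => ?_
    exact mul_le_mul_of_nonneg_right (hi₀ i) (sq_nonneg _)
  -- spectrum bounded above by L
  have hub : ∀ μ ∈ spectrum ℝ M, μ ≤ L := by
    intro μ hμ
    obtain ⟨u, hu0, hu⟩ := exists_eigenvector_of_mem_spectrum hμ
    have hupos : 0 < u ⬝ᵥ u := by
      have hnn : 0 ≤ u ⬝ᵥ u := Finset.sum_nonneg fun i _ => mul_self_nonneg _
      rcases hnn.lt_or_eq with h | h
      · exact h
      · exact absurd ((dotProduct_self_eq_zero).mp h.symm) hu0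
    have : μ * (u ⬝ᵥ u) ≤ L * (u ⬝ᵥ u) := by
      have := hq u
      rwa [hu, dotProduct_smul, smul_eq_mul] at this
    exact le_of_mul_le_mul_right this hupos
  have hmem : L ∈ spectrum ℝ M := hM.eigenvalues_mem_spectrum_real i₀
  have hsup : lamMax M = L := by
    refine le_antisymm (csSup_le ⟨L, hmem⟩ hub) (le_csSup ⟨L, hub⟩ hmem)
  rw [hsup]
  exact ⟨hmem, hq⟩


/-- For a connected graph on `n ≥ 1` vertices with adjacency matrix `A` and
`β, δ ∈ (0,1)`, the largest eigenvalue of `(1−δ)I + βA` exceeds `1` iff there is an entrywise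
strictly positive vector `v` with `(βA − δI)v` entrywise strictly positive. -/
theorem stmt0 {n : ℕ} (hn : 1 ≤ n) (G : SimpleGraph (Fin n)) [DecidableRel G.Adj]
    (hG : G.Connected) (β δ : ℝ) (hβ : β ∈ Set.Ioo (0 : ℝ) 1) (hδ : δ ∈ Set.Ioo (0 : ℝ) 1) :
    1 < lamMax ((1 - δ) • (1 : Matrix (Fin n) (Fin n) ℝ) + β • G.adjMatrix ℝ) ↔
      ∃ v : Fin n → ℝ, (∀ i, 0 < v i) ∧
        ∀ i, 0 < ((β • G.adjMatrix ℝ - δ • (1 : Matrix (Fin n) (Fin n) ℝ)) *ᵥ v) i := by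
  set A : Matrix (Fin n) (Fin n) ℝ := G.adjMatrix ℝ with hA
  set M : Matrix (Fin n) (Fin n) ℝ := (1 - δ) • 1 + β • A with hMdef
  obtain ⟨hβ0, hβ1⟩ := hβ
  obtain ⟨hδ0, hδ1⟩ := hδ
  -- entries of M
  have hMapp : ∀ i j, M i j =
      (if i = j then 1 - δ else 0) + (if G.Adj i j then β else 0) := by
    intro i j
    simp [hMdef, hA, Matrix.add_apply, Matrix.smul_apply, Matrix.one_apply, smul_eq_mul,
      mul_ite, mul_one, mul_zero, SimpleGraph.adjMatrix_apply]
  have hMnn : ∀ i j, 0 ≤ M i j := by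
    intro i j
    rw [hMapp]
    have h1 : (0:ℝ) ≤ if i = j then 1 - δ else 0 := by split <;> linarith
    have h2 : (0:ℝ) ≤ if G.Adj i j then β else 0 := by split <;> linarith
    linarith
  have hMdiag : ∀ i, 0 < M i i := by
    intro i
    rw [hMapp]
    simp [SimpleGraph.irrefl]
    linarith
  have hMadj : ∀ i j, G.Adj i j → 0 < M i j := by
    intro i j h
    rw [hMapp]
    have h1 : (0:ℝ) ≤ if i = j then 1 - δ else 0 := by split <;> linarith
    simp [h]
    linarith
  -- M is hermitian
  have hMh : M.IsHermitian := by
    rw [Matrix.IsHermitian, conjTranspose_eq_transpose_of_trivial]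
    ext i j
    rw [Matrix.transpose_apply, hMapp, hMapp]
    congr 1
    · simp [eq_comm]
    · exact if_congr (G.adj_comm j i) rfl rfl
  -- entries of powers of M are nonnegative
  have hpownn : ∀ k, ∀ i j, 0 ≤ (M ^ k) i j := by
    intro k
    induction k with
    | zero => intro i j; rw [pow_zero]; rw [Matrix.one_apply]; positivity
    | succ k ih =>
        intro i j
        rw [pow_succ, Matrix.mul_apply]
        exact Finset.sum_nonneg fun l _ => mul_nonneg (ih i l) (hMnn l j)
  -- entries of powers of M along walks are positive
  have hpowpos : ∀ k, ∀ i j : Fin n, (∃ p : G.Walk i j, p.length ≤ k) → 0 < (M ^ k) i j := by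
    intro k
    induction k with
    | zero =>
        rintro i j ⟨p, hp⟩
        have : i = j := p.eq_of_length_eq_zero (Nat.le_zero.mp hp)
        subst this
        simp [Matrix.one_apply]
    | succ k ih =>
        rintro i j ⟨p, hp⟩
        rw [pow_succ', Matrix.mul_apply]
        cases p with
        | nil =>
            have h0 : 0 < M i i * (M ^ k) i i :=
              mul_pos (hMdiag i) (ih i i ⟨SimpleGraph.Walk.nil, Nat.zero_le _⟩)
            calc (0:ℝ) < M i i * (M ^ k) i i := h0
              _ ≤ ∑ l, M i l * (M ^ k) l i := by
                  refine Finset.single_le_sum (f := fun l => M i l * (M ^ k) l i)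
                    (fun l _ => mul_nonneg (hMnn i l) (hpownn k l i)) (mem_univ i)
        | cons h q =>
            rename_i b
            have hq : q.length ≤ k := by
              have := hp
              simp [SimpleGraph.Walk.length_cons] at this
              omega
            have h0 : 0 < M i b * (M ^ k) b j :=
              mul_pos (hMadj i b h) (ih b j ⟨q, hq⟩)
            calc (0:ℝ) < M i b * (M ^ k) b j := h0
              _ ≤ ∑ l, M i l * (M ^ k) l j := by
                  refine Finset.single_le_sum (f := fun l => M i l * (M ^ k) l j)
                    (fun l _ => mul_nonneg (hMnn i l) (hpownn k l j)) (mem_univ b)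
  -- M^n has all entries positive
  have hMn : ∀ i j, 0 < (M ^ n) i j := by
    intro i j
    obtain ⟨w⟩ := hG i j
    refine hpowpos n i j ⟨w.toPath, ?_⟩
    have := (w.toPath : G.Path i j).2.length_lt
    simp at this
    omega
  -- relation between the two matrices
  have hBM : ∀ x : Fin n → ℝ, ∀ i,
      ((β • A - δ • (1 : Matrix (Fin n) (Fin n) ℝ)) *ᵥ x) i = (M *ᵥ x) i - x i := by
    intro x i
    have hMsplit : M = 1 + (β • A - δ • (1 : Matrix (Fin n) (Fin n) ℝ)) := by
      rw [hMdef, sub_smul, one_smul]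
      abel
    rw [hMsplit, Matrix.add_mulVec, Matrix.one_mulVec]
    simp
  have hspec := lamMax_spec hn hMh
  constructor
  · -- forward direction
    intro hlam
    obtain ⟨u, hu0, hu⟩ := exists_eigenvector_of_mem_spectrum hspec.1
    set lam := lamMax M with hlamdef
    have hlam0 : 0 < lam := lt_trans one_pos hlam
    obtain ⟨j₀, hj₀⟩ : ∃ j₀, u j₀ ≠ 0 := by
      by_contra h
      push_neg at h
      exact hu0 (funext fun i => h i)
    set w : Fin n → ℝ := fun i => |u i| with hw
    have hwnn : ∀ i, 0 ≤ w i := fun i => abs_nonneg _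
    have hMw : ∀ i, lam * w i ≤ (M *ᵥ w) i := by
      intro i
      have h1 : |(M *ᵥ u) i| = lam * w i := by
        rw [hu]
        simp [hw, abs_mul, abs_of_pos hlam0]
      rw [← h1]
      calc |(M *ᵥ u) i| = |∑ j, M i j * u j| := by rw [Matrix.mulVec, dotProduct]
        _ ≤ ∑ j, |M i j * u j| := Finset.abs_sum_le_sum_abs _ _
        _ = ∑ j, M i j * w j := by
            refine Finset.sum_congr rfl fun j _ => ?_
            rw [abs_mul, abs_of_nonneg (hMnn i j)]
        _ = (M *ᵥ w) i := by rw [Matrix.mulVec, dotProduct]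
    set v : Fin n → ℝ := (M ^ n) *ᵥ w with hv
    have hvpos : ∀ i, 0 < v i := by
      intro i
      have h0 : 0 < (M ^ n) i j₀ * w j₀ :=
        mul_pos (hMn i j₀) (abs_pos.mpr hj₀)
      calc (0:ℝ) < (M ^ n) i j₀ * w j₀ := h0
        _ ≤ ∑ j, (M ^ n) i j * w j :=
            Finset.single_le_sum (f := fun j => (M ^ n) i j * w j)
              (fun j _ => mul_nonneg (hpownn n i j) (hwnn j)) (mem_univ j₀)
        _ = v i := by rw [hv, Matrix.mulVec, dotProduct]
    refine ⟨v, hvpos, fun i => ?_⟩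
    rw [hBM]
    -- M *ᵥ v = M^n *ᵥ (M *ᵥ w)
    have hcomm : M *ᵥ v = (M ^ n) *ᵥ (M *ᵥ w) := by
      rw [hv, Matrix.mulVec_mulVec, Matrix.mulVec_mulVec, ← pow_succ', ← pow_succ]
    have hkey : (lam - 1) * v i ≤ (M *ᵥ v) i - v i := by
      have h1 : (M *ᵥ v) i - v i = ∑ j, (M ^ n) i j * ((M *ᵥ w) j - w j) := by
        rw [hcomm, hv]
        rw [Matrix.mulVec, Matrix.mulVec, dotProduct, dotProduct, ← Finset.sum_sub_distrib]
        refine Finset.sum_congr rfl fun j _ => ?_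
        ring
      rw [h1]
      have h2 : (lam - 1) * v i = ∑ j, (M ^ n) i j * ((lam - 1) * w j) := by
        rw [hv, Matrix.mulVec, dotProduct, Finset.mul_sum]
        refine Finset.sum_congr rfl fun j _ => ?_
        ring
      rw [h2]
      refine Finset.sum_le_sum fun j _ => ?_
      refine mul_le_mul_of_nonneg_left ?_ (hpownn n i j)
      have := hMw j
      linarith
    have : 0 < (lam - 1) * v i := mul_pos (by linarith) (hvpos i)
    linarith
  · -- backward direction
    rintro ⟨v, hvpos, hBv⟩
    have hMv : ∀ i, v i < (M *ᵥ v) i := by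
      intro i
      have := hBv i
      rw [hBM] at this
      linarith
    have hne : Nonempty (Fin n) := ⟨⟨0, hn⟩⟩
    have h1 : v ⬝ᵥ v < v ⬝ᵥ (M *ᵥ v) := by
      rw [dotProduct, dotProduct]
      refine Finset.sum_lt_sum_of_nonempty Finset.univ_nonempty fun i _ => ?_
      exact mul_lt_mul_of_pos_left (hMv i) (hvpos i)
    have h3 : 0 < v ⬝ᵥ v := by
      have hnn : 0 ≤ v ⬝ᵥ v := Finset.sum_nonneg fun i _ => mul_self_nonneg _
      rcases hnn.lt_or_eq with h | h
      · exact h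
      · exfalso
        have := (dotProduct_self_eq_zero).mp h.symm
        have := congrFun this ⟨0, hn⟩
        exact absurd this (ne_of_gt (hvpos ⟨0, hn⟩))
    have h2 := hspec.2 v
    have : v ⬝ᵥ v < lamMax M * (v ⬝ᵥ v) := lt_of_lt_of_le h1 h2
    nlinarith
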